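/- Let n ∈ ℕ, m ∈ {0,…,n}, and w_{1,k}, w_{2,k} ∈ ℂ for k ∈ {1,…,n}. Then the coefficient of y^m in the polynomial ∏_{k=1}^n (w_{1,k} + w_{2,k}·y) satisfies |[y^m] ∏_{k=1}^n (w_{1,k} + w_{2,k} y)| ≤ binom(n,m) · ((1/n) ∑_{k=1}^n |w_{2,k}|²)^{m/2} · ((1/n) ∑_{k=1}^n |w_{1,k}|²)^{(n−m)/2}. -/

import Mathlib

open Polynomial Finset

lemma coeff_prod_aux {ι : Type*} [DecidableEq ι] (s : Finset ι) (a b : ι → ℂ) :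
    ∀ m : ℕ, (∏ k ∈ s, (C (a k) + C (b k) * X)).coeff m =
      ∑ S ∈ s.powersetCard m, (∏ k ∈ S, b k) * ∏ k ∈ s \ S, a k := by
  induction s using Finset.induction_on with
  | empty =>
    intro m
    cases m with
    | zero => simp
    | succ j => rw [Finset.powersetCard_eq_empty.mpr (by simp)]; simp [Polynomial.coeff_one]
  | @insert x s hx ih =>
    intro m
    rw [Finset.prod_insert hx, add_mul, Polynomial.coeff_add, Polynomial.coeff_C_mul,
      mul_assoc, Polynomial.coeff_C_mul]
    cases m with
    | zero =>
      simp only [Finset.powersetCard_zero, Finset.sum_singleton, Finset.prod_empty, one_mul,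
        Finset.sdiff_empty, mul_comm X, Polynomial.coeff_mul_X_zero, mul_zero, add_zero,
        Finset.prod_insert hx, ih 0]
    | succ j =>
      have hinj : ∀ S ∈ s.powersetCard j, ∀ T ∈ s.powersetCard j,
          insert x S = insert x T → S = T := by
        intro S hS T hT h
        have hxS : x ∉ S := fun hh => hx (Finset.mem_of_subset (Finset.mem_powersetCard.mp hS).1 hh)
        have hxT : x ∉ T := fun hh => hx (Finset.mem_of_subset (Finset.mem_powersetCard.mp hT).1 hh)
        have := congrArg (fun U => Finset.erase U x) h
        simpa [Finset.erase_insert, hxS, hxT] using this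
      rw [Polynomial.coeff_X_mul, ih (j+1), ih j, Finset.powersetCard_succ_insert hx,
        Finset.sum_union]
      · congr 1
        · rw [Finset.mul_sum]
          refine Finset.sum_congr rfl fun S hS => ?_
          have hxS : x ∉ S := fun h => hx (Finset.mem_of_subset (Finset.mem_powersetCard.mp hS).1 h)
          rw [Finset.insert_sdiff_of_notMem _ hxS, Finset.prod_insert (by simp [hx])]
          ring
        · rw [Finset.sum_image hinj, Finset.mul_sum]
          refine Finset.sum_congr rfl fun S hS => ?_
          have hxS : x ∉ S := fun h => hx (Finset.mem_of_subset (Finset.mem_powersetCard.mp hS).1 h)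
          have hSs : S ⊆ s := (Finset.mem_powersetCard.mp hS).1
          rw [Finset.insert_sdiff_insert, Finset.sdiff_insert_of_notMem hx,
            Finset.prod_insert hxS]
          ring
      · rw [Finset.disjoint_right]
        intro S hS
        simp only [Finset.mem_image] at hS
        obtain ⟨T, hT, rfl⟩ := hS
        intro hmem
        exact hx (Finset.mem_of_subset (Finset.mem_powersetCard.mp hmem).1 (Finset.mem_insert_self x T))

lemma tangent_pow (m : ℕ) (hm : 1 ≤ m) {u t : ℝ} (hu : 0 ≤ u) (ht : 0 ≤ t) :
    u ^ m + m * u ^ (m - 1) * (t - u) ≤ t ^ m := by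
  rcases eq_or_lt_of_le hu with h | h
  · obtain rfl | hm2 : m = 1 ∨ 2 ≤ m := by omega
    · simp [← h]
    · rw [← h, zero_pow (by omega), zero_pow (by omega)]
      simpa using pow_nonneg ht m
  · have hu0 : u ≠ 0 := ne_of_gt h
    have hBer : 1 + (m : ℝ) * (t / u - 1) ≤ (1 + (t / u - 1)) ^ m :=
      one_add_mul_le_pow (by nlinarith [div_nonneg ht h.le]) m
    have h1 : (1 : ℝ) + (t / u - 1) = t / u := by ring
    rw [h1, div_pow] at hBer
    have hupow : 0 < u ^ m := pow_pos h m
    have hmul := mul_le_mul_of_nonneg_left hBer hupow.le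
    rw [mul_div_cancel₀ _ (ne_of_gt hupow)] at hmul
    have h3 : u ^ m = u ^ (m - 1) * u := by rw [← pow_succ]; congr 1; omega
    have key : u ^ m * (1 + (m : ℝ) * (t / u - 1)) = u ^ m + m * u ^ (m - 1) * (t - u) := by
      rw [h3]; field_simp
    linarith [key ▸ hmul]

lemma sum_powersetCard_succ_insert' {ι M : Type*} [DecidableEq ι] [AddCommMonoid M]
    {j : ι} {s : Finset ι} (hj : j ∉ s) (f : Finset ι → M) (i : ℕ) :
    ∑ S ∈ (insert j s).powersetCard (i+1), f S =
      ∑ S ∈ s.powersetCard (i+1), f S + ∑ S ∈ s.powersetCard i, f (insert j S) := by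
  rw [Finset.powersetCard_succ_insert hj, Finset.sum_union, Finset.sum_image]
  · intro S hS T hT h
    have hxS : j ∉ S := fun hh => hj (Finset.mem_of_subset (Finset.mem_powersetCard.mp hS).1 hh)
    have hxT : j ∉ T := fun hh => hj (Finset.mem_of_subset (Finset.mem_powersetCard.mp hT).1 hh)
    have := congrArg (fun U => Finset.erase U j) h
    simpa [Finset.erase_insert, hxS, hxT] using this
  · rw [Finset.disjoint_right]
    intro S hS
    simp only [Finset.mem_image] at hS
    obtain ⟨T, hT, rfl⟩ := hS
    intro hmem
    exact hj (Finset.mem_of_subset (Finset.mem_powersetCard.mp hmem).1 (Finset.mem_insert_self j T))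

lemma esymm_le {ι : Type*} [DecidableEq ι] (s : Finset ι) (x : ι → ℝ) :
    (∀ i ∈ s, 0 ≤ x i) → ∀ t : ℝ, 0 ≤ t → (∑ i ∈ s, x i) ≤ s.card * t →
    ∀ m : ℕ, ∑ S ∈ s.powersetCard m, ∏ i ∈ S, x i ≤ (s.card.choose m : ℝ) * t ^ m := by
  induction s using Finset.induction_on with
  | empty =>
    intro hx t ht hsum m
    cases m with
    | zero => simp
    | succ i => rw [Finset.powersetCard_eq_empty.mpr (by simp)]; simp
  | @insert j s hj ih =>
    intro hx t ht hsum m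
    have hxj : 0 ≤ x j := hx j (Finset.mem_insert_self j s)
    have hxs : ∀ i ∈ s, 0 ≤ x i := fun i hi => hx i (Finset.mem_insert_of_mem hi)
    have hcard : (insert j s).card = s.card + 1 := Finset.card_insert_of_notMem hj
    cases m with
    | zero => simp
    | succ i =>
      rw [hcard, sum_powersetCard_succ_insert' hj]
      have hsum2 : x j + ∑ i ∈ s, x i ≤ ((s.card : ℝ) + 1) * t := by
        rw [Finset.sum_insert hj, hcard] at hsum
        push_cast at hsum
        linarith
      have hsecond : ∑ S ∈ s.powersetCard i, ∏ k ∈ insert j S, x k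
          = x j * ∑ S ∈ s.powersetCard i, ∏ k ∈ S, x k := by
        rw [Finset.mul_sum]
        refine Finset.sum_congr rfl fun S hS => ?_
        rw [Finset.prod_insert (fun h => hj ((Finset.mem_powersetCard.mp hS).1 h))]
      rw [hsecond]
      rcases Nat.eq_zero_or_pos s.card with hc0 | hc1
      · have hs : s = ∅ := Finset.card_eq_zero.mp hc0
        subst hs
        simp only [Finset.card_empty] at hsum2 ⊢
        cases i with
        | zero =>
          rw [Finset.powersetCard_eq_empty.mpr (by simp)]
          simp only [Finset.sum_empty, Finset.powersetCard_zero, Finset.sum_singleton,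
            Finset.prod_empty, mul_one, zero_add, Nat.choose_self, Nat.cast_one, one_mul, pow_one,
            Nat.zero_add, Nat.cast_ofNat]
          norm_num
          simpa using hsum2
        | succ i' =>
          rw [Finset.powersetCard_eq_empty.mpr (by simp), Finset.powersetCard_eq_empty.mpr (by simp)]
          simp only [Finset.sum_empty, mul_zero, add_zero]
          positivity
      · set c := s.card with hc
        set X := ∑ i ∈ s, x i with hX
        have hX0 : 0 ≤ X := Finset.sum_nonneg hxs
        have hcne : (c : ℝ) ≠ 0 := by positivity
        set u := X / c with hu_def
        have hu : 0 ≤ u := div_nonneg hX0 (Nat.cast_nonneg c)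
        have hcu : (c : ℝ) * u = X := by rw [hu_def]; field_simp
        have hsum' : X ≤ (c : ℝ) * u := le_of_eq hcu.symm
        have hA := ih hxs u hu hsum' (i + 1)
        have hB := ih hxs u hu hsum' i
        have hBnn : (0:ℝ) ≤ ∑ S ∈ s.powersetCard i, ∏ k ∈ S, x k :=
          Finset.sum_nonneg fun S hS => Finset.prod_nonneg fun k hk =>
            hxs k ((Finset.mem_powersetCard.mp hS).1 hk)
        have hxj_le : x j ≤ ((c : ℝ) + 1) * t - c * u := by rw [hcu]; linarith
        have pascal : (((c+1).choose (i+1) : ℝ)) = c.choose i + c.choose (i+1) := by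
          exact_mod_cast Nat.choose_succ_succ c i
        have succmul : ((c : ℝ) + 1) * c.choose i = ((c+1).choose (i+1) : ℝ) * (i+1) := by
          exact_mod_cast Nat.add_one_mul_choose_eq c i
        have htan := tangent_pow (i+1) (by omega) hu ht
        simp only [Nat.add_sub_cancel] at htan
        push_cast at htan
        have hchoose_nn : (0:ℝ) ≤ (c.choose i : ℝ) * u ^ i := by positivity
        calc ∑ S ∈ s.powersetCard (i+1), ∏ k ∈ S, x k
              + x j * ∑ S ∈ s.powersetCard i, ∏ k ∈ S, x k
            ≤ (c.choose (i+1) : ℝ) * u ^ (i+1) + x j * ((c.choose i : ℝ) * u ^ i) := by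
              have := mul_le_mul_of_nonneg_left hB hxj
              linarith
          _ ≤ (c.choose (i+1) : ℝ) * u ^ (i+1)
              + (((c : ℝ) + 1) * t - c * u) * ((c.choose i : ℝ) * u ^ i) := by
              nlinarith [mul_le_mul_of_nonneg_right hxj_le hchoose_nn]
          _ = ((c+1).choose (i+1) : ℝ) * (u ^ (i+1) + ((i:ℝ)+1) * u ^ i * (t - u)) := by
              linear_combination (t * u ^ i - u ^ (i+1)) * succmul - (u ^ (i+1) : ℝ) * pascal
          _ ≤ ((c+1).choose (i+1) : ℝ) * t ^ (i+1) := by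
              have : (0:ℝ) ≤ ((c+1).choose (i+1) : ℝ) := by positivity
              nlinarith [htan]

/-- Let `n ∈ ℕ`, `m ∈ {0,…,n}`, and `w_{1,k}, w_{2,k} ∈ ℂ` for `k ∈ {1,…,n}`. Then
`|[y^m] ∏_{k=1}^n (w_{1,k} + w_{2,k} y)| ≤
  binom(n,m) · ((1/n) ∑ |w_{2,k}|²)^{m/2} · ((1/n) ∑ |w_{1,k}|²)^{(n−m)/2}`. -/
theorem stmt7 (n : ℕ) (hn : 1 ≤ n) (m : ℕ) (hm : m ≤ n) (w₁ w₂ : Fin n → ℂ) :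
    ‖(∏ k : Fin n, (Polynomial.C (w₁ k) + Polynomial.C (w₂ k) * Polynomial.X)).coeff m‖ ≤
      (n.choose m : ℝ) * ((n : ℝ)⁻¹ * ∑ k, ‖w₂ k‖ ^ 2) ^ ((m : ℝ) / 2) *
        ((n : ℝ)⁻¹ * ∑ k, ‖w₁ k‖ ^ 2) ^ (((n : ℝ) - m) / 2) := by
  classical
  have hn0 : (0:ℝ) < n := by exact_mod_cast hn
  set A : ℝ := (n : ℝ)⁻¹ * ∑ k, ‖w₂ k‖ ^ 2 with hA
  set B : ℝ := (n : ℝ)⁻¹ * ∑ k, ‖w₁ k‖ ^ 2 with hB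
  have hA0 : 0 ≤ A := by positivity
  have hB0 : 0 ≤ B := by positivity
  have hcardu : (Finset.univ : Finset (Fin n)).card = n := by simp
  -- step 1: expand coefficient
  have hco := coeff_prod_aux (Finset.univ : Finset (Fin n)) w₁ w₂ m
  rw [hco]
  -- step 2: triangle inequality
  have h2 : ‖∑ S ∈ (Finset.univ : Finset (Fin n)).powersetCard m,
        (∏ k ∈ S, w₂ k) * ∏ k ∈ Finset.univ \ S, w₁ k‖ ≤
      ∑ S ∈ (Finset.univ : Finset (Fin n)).powersetCard m,
        (∏ k ∈ S, ‖w₂ k‖) * ∏ k ∈ Finset.univ \ S, ‖w₁ k‖ := by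
    refine (norm_sum_le _ _).trans (le_of_eq (Finset.sum_congr rfl fun S hS => ?_))
    rw [norm_mul, norm_prod, norm_prod]
  -- step 3: Cauchy-Schwarz
  have h3 := Real.sum_mul_le_sqrt_mul_sqrt ((Finset.univ : Finset (Fin n)).powersetCard m)
      (fun S => ∏ k ∈ S, ‖w₂ k‖) (fun S => ∏ k ∈ Finset.univ \ S, ‖w₁ k‖)
  simp only [← Finset.prod_pow] at h3
  -- step 4: Maclaurin bound on the w₂ part
  have h4 : ∑ S ∈ (Finset.univ : Finset (Fin n)).powersetCard m, ∏ k ∈ S, ‖w₂ k‖ ^ 2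
      ≤ (n.choose m : ℝ) * A ^ m := by
    have := esymm_le (Finset.univ : Finset (Fin n)) (fun k => ‖w₂ k‖ ^ 2)
      (fun i _ => by positivity) A hA0 (by
        rw [hcardu, hA]
        rw [mul_comm ((n:ℝ)⁻¹) _, ← mul_assoc]
        rw [mul_comm (n:ℝ) _, mul_assoc, mul_inv_cancel₀ (ne_of_gt hn0), mul_one]) m
    rwa [hcardu] at this
  -- step 5: complement bijection and Maclaurin on the w₁ part
  have h5 : ∑ S ∈ (Finset.univ : Finset (Fin n)).powersetCard m, ∏ k ∈ Finset.univ \ S, ‖w₁ k‖ ^ 2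
      ≤ (n.choose m : ℝ) * B ^ (n - m) := by
    have hbij : ∑ S ∈ (Finset.univ : Finset (Fin n)).powersetCard m,
        ∏ k ∈ Finset.univ \ S, ‖w₁ k‖ ^ 2 =
        ∑ T ∈ (Finset.univ : Finset (Fin n)).powersetCard (n - m), ∏ k ∈ T, ‖w₁ k‖ ^ 2 := by
      refine Finset.sum_nbij' (fun S => Finset.univ \ S) (fun T => Finset.univ \ T) ?_ ?_ ?_ ?_ ?_
      · intro S hS
        rw [Finset.mem_powersetCard] at hS ⊢
        refine ⟨Finset.subset_univ _, ?_⟩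
        rw [Finset.card_univ_diff, hS.2, Fintype.card_fin]
      · intro T hT
        rw [Finset.mem_powersetCard] at hT ⊢
        refine ⟨Finset.subset_univ _, ?_⟩
        rw [Finset.card_univ_diff, hT.2, Fintype.card_fin]
        omega
      · intro S hS
        simp
      · intro T hT
        simp
      · intro S hS
        rfl
    rw [hbij]
    have := esymm_le (Finset.univ : Finset (Fin n)) (fun k => ‖w₁ k‖ ^ 2)
      (fun i _ => by positivity) B hB0 (by
        rw [hcardu, hB]
        rw [mul_comm ((n:ℝ)⁻¹) _, ← mul_assoc]
        rw [mul_comm (n:ℝ) _, mul_assoc, mul_inv_cancel₀ (ne_of_gt hn0), mul_one]) (n - m)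
    rwa [hcardu, Nat.choose_symm hm] at this
  -- combine
  have hsq2 : Real.sqrt (∑ S ∈ (Finset.univ : Finset (Fin n)).powersetCard m,
        ∏ k ∈ S, ‖w₂ k‖ ^ 2) ≤ Real.sqrt ((n.choose m : ℝ) * A ^ m) :=
    Real.sqrt_le_sqrt h4
  have hsq1 : Real.sqrt (∑ S ∈ (Finset.univ : Finset (Fin n)).powersetCard m,
        ∏ k ∈ Finset.univ \ S, ‖w₁ k‖ ^ 2) ≤ Real.sqrt ((n.choose m : ℝ) * B ^ (n - m)) :=
    Real.sqrt_le_sqrt h5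
  have hfinal : Real.sqrt ((n.choose m : ℝ) * A ^ m) * Real.sqrt ((n.choose m : ℝ) * B ^ (n - m))
      = (n.choose m : ℝ) * A ^ ((m : ℝ) / 2) * B ^ (((n : ℝ) - m) / 2) := by
    have hsqrtpow : ∀ (x : ℝ), 0 ≤ x → ∀ j : ℕ, Real.sqrt (x ^ j) = x ^ ((j : ℝ) / 2) := by
      intro x hx j
      rw [Real.sqrt_eq_rpow, ← Real.rpow_natCast x j, ← Real.rpow_mul hx, mul_one_div]
    have hnm : ((n - m : ℕ) : ℝ) = (n : ℝ) - m := by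
      push_cast [Nat.cast_sub hm]; ring
    rw [Real.sqrt_mul (by positivity), Real.sqrt_mul (by positivity),
      hsqrtpow A hA0 m, hsqrtpow B hB0 (n - m), hnm]
    have hCC : Real.sqrt (n.choose m : ℝ) * Real.sqrt (n.choose m : ℝ) = (n.choose m : ℝ) :=
      Real.mul_self_sqrt (by positivity)
    calc Real.sqrt (n.choose m : ℝ) * A ^ ((m : ℝ) / 2) *
          (Real.sqrt (n.choose m : ℝ) * B ^ (((n : ℝ) - m) / 2))
        = (Real.sqrt (n.choose m : ℝ) * Real.sqrt (n.choose m : ℝ)) *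
          A ^ ((m : ℝ) / 2) * B ^ (((n : ℝ) - m) / 2) := by ring
      _ = (n.choose m : ℝ) * A ^ ((m : ℝ) / 2) * B ^ (((n : ℝ) - m) / 2) := by rw [hCC]
  calc ‖∑ S ∈ (Finset.univ : Finset (Fin n)).powersetCard m,
        (∏ k ∈ S, w₂ k) * ∏ k ∈ Finset.univ \ S, w₁ k‖
      ≤ ∑ S ∈ (Finset.univ : Finset (Fin n)).powersetCard m,
        (∏ k ∈ S, ‖w₂ k‖) * ∏ k ∈ Finset.univ \ S, ‖w₁ k‖ := h2
    _ ≤ Real.sqrt (∑ S ∈ (Finset.univ : Finset (Fin n)).powersetCard m, ∏ k ∈ S, ‖w₂ k‖ ^ 2) *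
        Real.sqrt (∑ S ∈ (Finset.univ : Finset (Fin n)).powersetCard m,
          ∏ k ∈ Finset.univ \ S, ‖w₁ k‖ ^ 2) := h3
    _ ≤ Real.sqrt ((n.choose m : ℝ) * A ^ m) * Real.sqrt ((n.choose m : ℝ) * B ^ (n - m)) := by
        exact mul_le_mul hsq2 hsq1 (Real.sqrt_nonneg _) (Real.sqrt_nonneg _)
    _ = (n.choose m : ℝ) * A ^ ((m : ℝ) / 2) * B ^ (((n : ℝ) - m) / 2) := hfinal
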